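/- For each index i, the Hermitian operator M_i = |b_i⟩⟨b_i| − Σ_k |⟨b_i, a'_k⟩|² |a'_k⟩⟨a'_k| satisfies sup over unit vectors ψ of |⟨ψ, M_i ψ⟩| = sup over unit vectors ψ of ⟨ψ, M_i ψ⟩ (that is, the spectral radius of M_i is attained by a nonnegative eigenvalue). Consequently η(𝒜',ℬ) = max_i sup over unit vectors ψ of (|⟨ψ, b_i⟩|² − Σ_k |⟨ψ, a'_k⟩|² |⟨b_i, a'_k⟩|²). -/

import Mathlib

open scoped ComplexInnerProductSpace

noncomputable section

variable {H : Type*} [NormedAddCommGroup H] [InnerProductSpace ℂ H] [FiniteDimensional ℂ H]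
variable {ι ι' : Type*} [Fintype ι] [Fintype ι']

/-- The rank-one projector `|v⟩⟨v|`. -/
def ketbra (v : H) : H →ₗ[ℂ] H where
  toFun x := ⟪v, x⟫ • v
  map_add' x y := by simp [inner_add_right, add_smul]
  map_smul' c x := by simp [inner_smul_right, mul_smul]

/-- A density operator: self-adjoint, positive semidefinite, trace one. -/
def IsDensity (ρ : H →ₗ[ℂ] H) : Prop :=
  LinearMap.IsSymmetric ρ ∧ (∀ x : H, 0 ≤ (⟪x, ρ x⟫).re) ∧
    LinearMap.trace ℂ H ρ = 1

/-- The state-dependent error `ε_ρ(𝒜,𝒜')`. -/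
def sdError (a a' : ι → H) (ρ : H →ₗ[ℂ] H) : ℝ :=
  ⨆ i : ι, ‖LinearMap.trace ℂ H (ρ ∘ₗ (ketbra (a i) - ketbra (a' i)))‖

/-- The state-independent error `ε(𝒜,𝒜')`. -/
def siError (a a' : ι → H) : ℝ :=
  ⨆ ρ : {ρ : H →ₗ[ℂ] H // IsDensity ρ}, sdError a a' ρ.1

/-- The operator `|b_i⟩⟨b_i| − Σ_j |⟨a'_j, b_i⟩|² |a'_j⟩⟨a'_j|`. -/
def distOp (a' : ι' → H) (b : ι → H) (i : ι) : H →ₗ[ℂ] H :=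
  ketbra (b i) - ∑ j : ι', (‖⟪a' j, b i⟫‖ ^ 2 : ℂ) • ketbra (a' j)

/-- The state-dependent disturbance `η_ρ(𝒜',ℬ)`. -/
def sdDist (a' : ι' → H) (b : ι → H) (ρ : H →ₗ[ℂ] H) : ℝ :=
  ⨆ i : ι, ‖LinearMap.trace ℂ H (ρ ∘ₗ distOp a' b i)‖

/-- The state-independent disturbance `η(𝒜',ℬ)`. -/
def siDist (a' : ι' → H) (b : ι → H) : ℝ :=
  ⨆ ρ : {ρ : H →ₗ[ℂ] H // IsDensity ρ}, sdDist a' b ρ.1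

/-- The state-independent overall error `Δ(𝒜,𝒜',ℬ)`. -/
def siOverall (a a' b : ι → H) : ℝ :=
  ⨆ ρ : {ρ : H →ₗ[ℂ] H // IsDensity ρ}, (sdError a a' ρ.1 + sdDist a' b ρ.1)

set_option linter.unusedSectionVars false

lemma ketbra_apply (v x : H) : ketbra v x = ⟪v, x⟫ • v := rfl

lemma trace_eq_sum_inner'' (e : OrthonormalBasis ι ℂ H) (T : H →ₗ[ℂ] H) :
    LinearMap.trace ℂ H T = ∑ i, ⟪e i, T (e i)⟫ := by
  classical
  rw [LinearMap.trace_eq_matrix_trace ℂ e.toBasis, Matrix.trace]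
  simp [Matrix.diag, LinearMap.toMatrix_apply, OrthonormalBasis.coe_toBasis_repr_apply,
    OrthonormalBasis.repr_apply_apply, OrthonormalBasis.coe_toBasis]

lemma trace_ketbra (e : OrthonormalBasis ι ℂ H) (v : H) :
    LinearMap.trace ℂ H (ketbra v) = (‖v‖ ^ 2 : ℝ) := by
  rw [trace_eq_sum_inner'' e]
  simp only [ketbra_apply, inner_smul_right]
  calc (∑ i, ⟪v, e i⟫ * ⟪e i, v⟫) = ⟪v, v⟫ := e.sum_inner_mul_inner v v
  _ = (‖v‖^2 : ℝ) := by rw [inner_self_eq_norm_sq_to_K]; norm_cast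



lemma inner_mul_inner_self' (x v : H) : ⟪x, v⟫ * ⟪v, x⟫ = ((‖⟪x, v⟫‖ : ℂ)) ^ 2 := by
  rw [← inner_conj_symm v x, RCLike.mul_conj]
  norm_cast

lemma inner_distOp (a' : ι' → H) (b : ι → H) (i : ι) (x y : H) :
    ⟪x, distOp a' b i y⟫ = ⟪x, b i⟫ * ⟪b i, y⟫
      - ∑ k, (‖⟪a' k, b i⟫‖ ^ 2 : ℂ) * (⟪x, a' k⟫ * ⟪a' k, y⟫) := by
  simp only [distOp, LinearMap.sub_apply, LinearMap.sum_apply, LinearMap.smul_apply,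
    ketbra_apply, inner_sub_right, inner_sum, inner_smul_right]
  congr 1
  · ring
  · exact Finset.sum_congr rfl fun k _ => by ring

lemma distOp_isSymmetric (a' : ι' → H) (b : ι → H) (i : ι) :
    (distOp a' b i).IsSymmetric := by
  intro x y
  rw [← inner_conj_symm (distOp a' b i x) y, inner_distOp, inner_distOp]
  simp only [map_sub, map_sum, map_mul, map_pow, inner_conj_symm, Complex.conj_ofReal]
  congr 1
  · ring
  · exact Finset.sum_congr rfl fun k _ => by ring

lemma inner_distOp_self (a' : ι' → H) (b : ι → H) (i : ι) (x : H) :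
    ⟪x, distOp a' b i x⟫ =
      ((‖⟪x, b i⟫‖ ^ 2 - ∑ k, ‖⟪x, a' k⟫‖ ^ 2 * ‖⟪b i, a' k⟫‖ ^ 2 : ℝ) : ℂ) := by
  rw [inner_distOp]
  push_cast
  congr 1
  · exact inner_mul_inner_self' x (b i)
  · refine Finset.sum_congr rfl fun k _ => ?_
    rw [show (‖⟪a' k, b i⟫‖:ℂ) ^ 2 * (⟪x, a' k⟫ * ⟪a' k, x⟫)
        = (⟪x, a' k⟫ * ⟪a' k, x⟫) * (‖⟪a' k, b i⟫‖:ℂ) ^ 2 from by ring,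
      inner_mul_inner_self', norm_inner_symm (b i) (a' k)]

lemma sum_inner_sq_eq_one (a' : OrthonormalBasis ι' ℂ H) {v : H} (hv : ‖v‖ = 1) :
    ∑ j : ι', ((‖⟪(a' : ι' → H) j, v⟫‖ : ℂ)) ^ 2 = 1 := by
  have h := a'.sum_inner_mul_inner v v
  rw [inner_self_eq_norm_sq_to_K, hv] at h
  norm_num at h
  rw [← h]
  refine Finset.sum_congr rfl fun k _ => ?_
  rw [inner_mul_inner_self' v (a' k), norm_inner_symm]

lemma trace_distOp (a' : OrthonormalBasis ι' ℂ H) (b : ι → H) (i : ι) (hb : ‖b i‖ = 1)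
    (e : OrthonormalBasis ι ℂ H) :
    LinearMap.trace ℂ H (distOp (⇑a') b i) = 0 := by
  have h1 : LinearMap.trace ℂ H (distOp (⇑a') b i)
      = LinearMap.trace ℂ H (ketbra (b i))
        - ∑ j : ι', (‖⟪a' j, b i⟫‖ ^ 2 : ℂ) * LinearMap.trace ℂ H (ketbra (a' j)) := by
    simp [distOp, map_sub, map_sum, map_smul, smul_eq_mul]
  have h2 : ∀ j : ι', LinearMap.trace ℂ H (ketbra ((a' : ι' → H) j)) = 1 := by
    intro j
    rw [trace_ketbra e]
    simp [a'.orthonormal.1 j]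
  rw [h1, trace_ketbra e, hb]
  simp only [h2, mul_one]
  rw [sum_inner_sq_eq_one a' hb]
  norm_num

lemma trace_ketbra_comp (e : OrthonormalBasis ι ℂ H) {T : H →ₗ[ℂ] H}
    (hT : T.IsSymmetric) (v : H) :
    LinearMap.trace ℂ H (ketbra v ∘ₗ T) = ⟪v, T v⟫ := by
  rw [trace_eq_sum_inner'' e]
  simp only [LinearMap.comp_apply, ketbra_apply, inner_smul_right]
  calc (∑ j, ⟪v, T (e j)⟫ * ⟪e j, v⟫) = ∑ j, ⟪T v, e j⟫ * ⟪e j, v⟫ :=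
        Finset.sum_congr rfl fun j _ => by rw [← hT v (e j)]
  _ = ⟪T v, v⟫ := e.sum_inner_mul_inner (T v) v
  _ = ⟪v, T v⟫ := hT v v

lemma isDensity_ketbra {v : H} (hv : ‖v‖ = 1) (e : OrthonormalBasis ι ℂ H) :
    IsDensity (ketbra v) := by
  refine ⟨?_, ?_, ?_⟩
  · intro x y
    simp only [ketbra_apply, inner_smul_left, inner_smul_right, inner_conj_symm]
    ring
  · intro x
    rw [ketbra_apply, inner_smul_right, inner_mul_inner_self']
    have : ((‖⟪v, x⟫‖ : ℂ)) ^ 2 = ((‖⟪v, x⟫‖ ^ 2 : ℝ) : ℂ) := by norm_cast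
    rw [this, Complex.ofReal_re]
    positivity
  · rw [trace_ketbra e, hv]
    norm_num

lemma key {d : ℕ} (hd : 2 ≤ d) (a' b : OrthonormalBasis (Fin d) ℂ H) (i : Fin d) :
    ∃ μ : ℝ, 0 ≤ μ ∧
      (∃ ψ : H, ‖ψ‖ = 1 ∧ ⟪ψ, distOp (⇑a') (⇑b) i ψ⟫ = (μ : ℂ)) ∧
      (∀ ψ : H, ‖ψ‖ = 1 → ‖⟪ψ, distOp (⇑a') (⇑b) i ψ⟫‖ ≤ μ) ∧
      (∀ ρ : H →ₗ[ℂ] H, IsDensity ρ →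
        ‖LinearMap.trace ℂ H (ρ ∘ₗ distOp (⇑a') (⇑b) i)‖ ≤ μ) := by
  classical
  have hιne : Nonempty (Fin d) := ⟨⟨0, by omega⟩⟩
  set M := distOp (⇑a') (⇑b) i with hMdef
  have hsym : M.IsSymmetric := distOp_isSymmetric _ _ i
  have hrank : Module.finrank ℂ H = d := by
    rw [Module.finrank_eq_card_basis b.toBasis, Fintype.card_fin]
  set e := hsym.eigenvectorBasis hrank with he
  set ev := hsym.eigenvalues hrank with hev
  have happ : ∀ j, M (e j) = (ev j : ℂ) • e j := fun j => hsym.apply_eigenvectorBasis hrank j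
  have hnorm : ∀ j, ‖e j‖ = 1 := fun j => e.orthonormal.1 j
  have hself : ∀ j, ⟪e j, e j⟫ = (1 : ℂ) := by
    intro j
    rw [inner_self_eq_norm_sq_to_K, hnorm j]
    norm_num
  have hMee : ∀ j, ⟪e j, M (e j)⟫ = ((ev j : ℝ) : ℂ) := by
    intro j
    rw [happ j, inner_smul_right, hself j, mul_one]
  -- step A : the quadratic form is ≤ 0 on the hyperplane orthogonal to b i
  have stepA : ∀ ψ : H, ⟪b i, ψ⟫ = 0 → (⟪ψ, M ψ⟫).re ≤ 0 := by
    intro ψ hψ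
    rw [hMdef, inner_distOp_self, Complex.ofReal_re]
    have h0 : ‖⟪ψ, b i⟫‖ = 0 := by
      rw [norm_inner_symm, hψ, norm_zero]
    have hs : (0:ℝ) ≤ ∑ k, ‖⟪ψ, (a' : Fin d → H) k⟫‖ ^ 2 * ‖⟪b i, (a' : Fin d → H) k⟫‖ ^ 2 :=
      Finset.sum_nonneg fun k _ => by positivity
    rw [h0]
    nlinarith
  -- eigenvalues sum to zero
  have hsum : ∑ j, ev j = 0 := by
    have h1 : LinearMap.trace ℂ H M = ∑ j, ((ev j : ℝ) : ℂ) := by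
      rw [trace_eq_sum_inner'' e]
      exact Finset.sum_congr rfl fun j _ => hMee j
    rw [trace_distOp a' (⇑b) i (b.orthonormal.1 i) b] at h1
    have : ((∑ j, ev j : ℝ) : ℂ) = 0 := by push_cast; rw [← h1]
    exact_mod_cast this
  obtain ⟨j0, hj0⟩ := Finite.exists_max ev
  -- quadratic form expansion
  have hquad : ∀ ψ : H, ⟪ψ, M ψ⟫ = ∑ j, ((ev j : ℂ) * ((‖⟪e j, ψ⟫‖ : ℂ)) ^ 2) := by
    intro ψ
    calc ⟪ψ, M ψ⟫ = ∑ j, ⟪ψ, e j⟫ * ⟪e j, M ψ⟫ := (e.sum_inner_mul_inner ψ (M ψ)).symm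
    _ = ∑ j, (ev j : ℂ) * ((‖⟪e j, ψ⟫‖ : ℂ)) ^ 2 := by
        refine Finset.sum_congr rfl fun j _ => ?_
        rw [← hsym (e j) ψ, happ j, inner_smul_left, Complex.conj_ofReal,
          show ⟪ψ, e j⟫ * ((ev j : ℂ) * ⟪e j, ψ⟫)
            = (ev j : ℂ) * (⟪e j, ψ⟫ * ⟪ψ, e j⟫) from by ring,
          inner_mul_inner_self']
  have hcoef : ∀ ψ : H, ‖ψ‖ = 1 → ∑ j, ‖⟪e j, ψ⟫‖ ^ 2 = 1 := by
    intro ψ hψ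
    have h := sum_inner_sq_eq_one e hψ
    exact_mod_cast h
  -- at most one positive eigenvalue
  have hneg : 0 < ev j0 → ∀ j, j ≠ j0 → ev j ≤ 0 := by
    intro hpos j hne
    by_contra hj
    push_neg at hj
    by_cases hb0 : ⟪b i, e j0⟫ = 0
    · have hA := stepA (e j0) hb0
      rw [hMee j0, Complex.ofReal_re] at hA
      linarith
    · set c : ℂ := ⟪b i, e j⟫ with hc
      set c' : ℂ := ⟪b i, e j0⟫ with hc'
      set ψ : H := c • e j0 - c' • e j with hψdef
      have h01 : ⟪e j0, e j⟫ = 0 := e.orthonormal.2 (Ne.symm hne)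
      have h10 : ⟪e j, e j0⟫ = 0 := e.orthonormal.2 hne
      have hbψ : ⟪b i, ψ⟫ = 0 := by
        rw [hψdef, inner_sub_right, inner_smul_right, inner_smul_right, ← hc, ← hc']
        ring
      have hMψ : M ψ = (c * (ev j0 : ℂ)) • e j0 - (c' * (ev j : ℂ)) • e j := by
        rw [hψdef, map_sub, map_smul, map_smul, happ, happ, smul_smul, smul_smul]
      have hval : ⟪ψ, M ψ⟫ = ((‖c‖ ^ 2 * ev j0 + ‖c'‖ ^ 2 * ev j : ℝ) : ℂ) := by
        rw [hψdef, hMψ]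
        simp only [inner_sub_left, inner_sub_right, inner_smul_left, inner_smul_right,
          hself, h01, h10, mul_zero, zero_mul, mul_one, sub_zero, zero_sub, sub_neg_eq_add]
        rw [show c * (ev j0 : ℂ) * (starRingEnd ℂ) c - c' * (ev j : ℂ) * -((starRingEnd ℂ) c')
            = ((starRingEnd ℂ) c * c) * (ev j0 : ℂ) + ((starRingEnd ℂ) c' * c') * (ev j : ℂ)
            from by ring, RCLike.conj_mul, RCLike.conj_mul]
        show ((‖c‖:ℂ)) ^ 2 * ((ev j0 : ℝ) : ℂ) + ((‖c'‖:ℂ)) ^ 2 * ((ev j : ℝ) : ℂ)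
            = (((‖c‖ ^ 2 * ev j0 + ‖c'‖ ^ 2 * ev j : ℝ)) : ℂ)
        push_cast
        ring
      have hA := stepA ψ hbψ
      rw [hval, Complex.ofReal_re] at hA
      have hc'pos : 0 < ‖c'‖ ^ 2 := by
        have h := norm_pos_iff.mpr hb0
        exact pow_pos h 2
      nlinarith [sq_nonneg ‖c‖]
  -- the top eigenvalue dominates all absolute values
  have hmaxabs : ∀ j, |ev j| ≤ ev j0 := by
    rcases le_or_gt (ev j0) 0 with hle | hpos
    · have hall : ∀ j, ev j = 0 := by
        have h := (Finset.sum_eq_zero_iff_of_nonpos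
          (fun j _ => (hj0 j).trans hle)).1 hsum
        exact fun j => h j (Finset.mem_univ j)
      intro j
      rw [hall j, hall j0]
      norm_num
    · intro j
      rcases le_or_gt 0 (ev j) with h | h
      · rw [abs_of_nonneg h]; exact hj0 j
      · rw [abs_of_neg h]
        have hne : j ≠ j0 := fun hEq => by rw [hEq] at h; linarith
        have herase : ∑ k ∈ Finset.univ.erase j0, ev k = -ev j0 := by
          have h2 := Finset.add_sum_erase Finset.univ ev (Finset.mem_univ j0)
          rw [hsum] at h2
          linarith
        calc -ev j ≤ ∑ k ∈ Finset.univ.erase j0, -ev k :=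
              Finset.single_le_sum
                (fun k hk => neg_nonneg.2 (hneg hpos k (Finset.ne_of_mem_erase hk)))
                (Finset.mem_erase.2 ⟨hne, Finset.mem_univ j⟩)
        _ = ev j0 := by rw [Finset.sum_neg_distrib, herase]; ring
  have hμ0 : 0 ≤ ev j0 := le_trans (abs_nonneg _) (hmaxabs j0)
  refine ⟨ev j0, hμ0, ⟨e j0, hnorm j0, hMee j0⟩, ?_, ?_⟩
  · intro ψ hψ
    have h1 : ⟪ψ, M ψ⟫ = ((∑ j, ev j * ‖⟪e j, ψ⟫‖ ^ 2 : ℝ) : ℂ) := by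
      rw [hquad ψ]
      push_cast
      ring_nf
    rw [h1, Complex.norm_real, Real.norm_eq_abs]
    calc |∑ j, ev j * ‖⟪e j, ψ⟫‖ ^ 2| ≤ ∑ j, |ev j * ‖⟪e j, ψ⟫‖ ^ 2| :=
          Finset.abs_sum_le_sum_abs _ _
    _ ≤ ∑ j, ev j0 * ‖⟪e j, ψ⟫‖ ^ 2 := by
        refine Finset.sum_le_sum fun j _ => ?_
        rw [abs_mul, abs_of_nonneg (by positivity : (0:ℝ) ≤ ‖⟪e j, ψ⟫‖ ^ 2)]
        exact mul_le_mul_of_nonneg_right (hmaxabs j) (by positivity)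
    _ = ev j0 := by rw [← Finset.mul_sum, hcoef ψ hψ, mul_one]
  · intro ρ hρ
    obtain ⟨hρsym, hρpos, hρtr⟩ := hρ
    set t : Fin d → ℝ := fun j => (⟪e j, ρ (e j)⟫).re with ht
    have hreal : ∀ j, ⟪e j, ρ (e j)⟫ = ((t j : ℝ) : ℂ) := by
      intro j
      have hconj : (starRingEnd ℂ) ⟪e j, ρ (e j)⟫ = ⟪e j, ρ (e j)⟫ := by
        rw [inner_conj_symm]
        exact hρsym (e j) (e j)
      have := Complex.conj_eq_iff_re.1 hconj
      exact this.symm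
    have htsum : ∑ j, t j = 1 := by
      have h1 : LinearMap.trace ℂ H ρ = ((∑ j, t j : ℝ) : ℂ) := by
        rw [trace_eq_sum_inner'' e]
        push_cast
        exact Finset.sum_congr rfl fun j _ => hreal j
      rw [hρtr] at h1
      exact_mod_cast h1.symm
    have htr : LinearMap.trace ℂ H (ρ ∘ₗ M) = ((∑ j, ev j * t j : ℝ) : ℂ) := by
      rw [trace_eq_sum_inner'' e]
      push_cast
      refine Finset.sum_congr rfl fun j _ => ?_
      simp only [Function.comp_apply]
      rw [happ j, map_smul, inner_smul_right, hreal j]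
    rw [htr, Complex.norm_real, Real.norm_eq_abs]
    calc |∑ j, ev j * t j| ≤ ∑ j, |ev j * t j| := Finset.abs_sum_le_sum_abs _ _
    _ ≤ ∑ j, ev j0 * t j := by
        refine Finset.sum_le_sum fun j _ => ?_
        rw [abs_mul, abs_of_nonneg (hρpos (e j))]
        exact mul_le_mul_of_nonneg_right (hmaxabs j) (hρpos (e j))
    _ = ev j0 := by rw [← Finset.mul_sum, htsum, mul_one]

lemma re_le_norm' (z : ℂ) : z.re ≤ ‖z‖ := by
  calc z.re ≤ |z.re| := le_abs_self _
  _ ≤ ‖z‖ := Complex.abs_re_le_norm z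


/-- the spectral radius of each `M_i` is attained by a nonnegative eigenvalue,
and consequently `η(𝒜',ℬ)` is a maximum over pure states without absolute value. -/
theorem disturbance_perron_frobenius {d : ℕ} (hd : 2 ≤ d)
    (a' b : OrthonormalBasis (Fin d) ℂ H) :
    (∀ i : Fin d,
      (⨆ ψ : {ψ : H // ‖ψ‖ = 1}, ‖⟪(ψ : H), distOp (⇑a') (⇑b) i (ψ : H)⟫‖)
        = ⨆ ψ : {ψ : H // ‖ψ‖ = 1}, (⟪(ψ : H), distOp (⇑a') (⇑b) i (ψ : H)⟫).re) ∧
    (siDist (⇑a') (⇑b) = ⨆ i : Fin d, ⨆ ψ : {ψ : H // ‖ψ‖ = 1},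
      (‖⟪(ψ : H), b i⟫‖ ^ 2 - ∑ k : Fin d, ‖⟪(ψ : H), a' k⟫‖ ^ 2 * ‖⟪b i, a' k⟫‖ ^ 2)) := by
  classical
  choose μ hμ0 hex hub hρub using fun i : Fin d => key hd a' b i
  have hFinne : Nonempty (Fin d) := ⟨⟨0, by omega⟩⟩
  have hne : Nonempty {ψ : H // ‖ψ‖ = 1} :=
    ⟨⟨b ⟨0, by omega⟩, b.orthonormal.1 _⟩⟩
  have hdne : Nonempty {ρ : H →ₗ[ℂ] H // IsDensity ρ} :=
    ⟨⟨ketbra (b ⟨0, by omega⟩), isDensity_ketbra (b.orthonormal.1 _) b⟩⟩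
  -- the sup of the norms is μ i
  have hbdd1 : ∀ i : Fin d, BddAbove (Set.range fun ψ : {ψ : H // ‖ψ‖ = 1} =>
      ‖⟪(ψ : H), distOp (⇑a') (⇑b) i (ψ : H)⟫‖) := by
    intro i
    refine ⟨μ i, ?_⟩
    rintro _ ⟨ψ, rfl⟩
    exact hub i ψ ψ.2
  have hsupnorm : ∀ i : Fin d,
      (⨆ ψ : {ψ : H // ‖ψ‖ = 1}, ‖⟪(ψ : H), distOp (⇑a') (⇑b) i (ψ : H)⟫‖) = μ i := by
    intro i
    apply le_antisymm
    · exact ciSup_le fun ψ => hub i ψ ψ.2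
    · obtain ⟨ψ0, hψ01, hψ0v⟩ := hex i
      calc μ i = ‖((μ i : ℝ) : ℂ)‖ := by
            rw [Complex.norm_real, Real.norm_eq_abs, abs_of_nonneg (hμ0 i)]
      _ = ‖⟪(ψ0 : H), distOp (⇑a') (⇑b) i ψ0⟫‖ := by rw [hψ0v]
      _ ≤ _ := le_ciSup (hbdd1 i) (⟨ψ0, hψ01⟩ : {ψ : H // ‖ψ‖ = 1})
  -- the sup of the real parts is μ i
  have hsupre : ∀ i : Fin d,
      (⨆ ψ : {ψ : H // ‖ψ‖ = 1}, (⟪(ψ : H), distOp (⇑a') (⇑b) i (ψ : H)⟫).re) = μ i := by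
    intro i
    apply le_antisymm
    · exact ciSup_le fun ψ => le_trans (re_le_norm' _) (hub i ψ ψ.2)
    · obtain ⟨ψ0, hψ01, hψ0v⟩ := hex i
      have hbdd : BddAbove (Set.range fun ψ : {ψ : H // ‖ψ‖ = 1} =>
          (⟪(ψ : H), distOp (⇑a') (⇑b) i (ψ : H)⟫).re) := by
        refine ⟨μ i, ?_⟩
        rintro _ ⟨ψ, rfl⟩
        exact le_trans (re_le_norm' _) (hub i ψ ψ.2)
      calc μ i = (⟪(ψ0 : H), distOp (⇑a') (⇑b) i ψ0⟫).re := by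
            rw [hψ0v, Complex.ofReal_re]
      _ ≤ _ := le_ciSup hbdd (⟨ψ0, hψ01⟩ : {ψ : H // ‖ψ‖ = 1})
  constructor
  · intro i
    rw [hsupnorm i, hsupre i]
  -- part 2
  have hbddμ : BddAbove (Set.range μ) := Set.Finite.bddAbove (Set.finite_range μ)
  set S := ⨆ i : Fin d, μ i with hS
  have hsd_le : ∀ ρ : H →ₗ[ℂ] H, IsDensity ρ → sdDist (⇑a') (⇑b) ρ ≤ S := by
    intro ρ hρ
    exact ciSup_le fun i => le_trans (hρub i ρ hρ) (le_ciSup hbddμ i)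
  have hsi_le : siDist (⇑a') (⇑b) ≤ S :=
    ciSup_le fun ρ => hsd_le ρ.1 ρ.2
  have hsi_ge : S ≤ siDist (⇑a') (⇑b) := by
    refine ciSup_le fun i => ?_
    obtain ⟨ψ0, hψ01, hψ0v⟩ := hex i
    have hdens : IsDensity (ketbra ψ0 : H →ₗ[ℂ] H) := isDensity_ketbra hψ01 b
    have htr : ‖LinearMap.trace ℂ H ((ketbra ψ0 : H →ₗ[ℂ] H) ∘ₗ distOp (⇑a') (⇑b) i)‖ = μ i := by
      rw [trace_ketbra_comp b (distOp_isSymmetric (⇑a') (⇑b) i) ψ0, hψ0v,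
        Complex.norm_real, Real.norm_eq_abs, abs_of_nonneg (hμ0 i)]
    have h1 : μ i ≤ sdDist (⇑a') (⇑b) (ketbra ψ0) := by
      rw [← htr]
      refine le_ciSup (f := fun i' : Fin d =>
        ‖LinearMap.trace ℂ H ((ketbra ψ0 : H →ₗ[ℂ] H) ∘ₗ distOp (⇑a') (⇑b) i')‖) ?_ i
      exact Set.Finite.bddAbove (Set.finite_range _)
    refine le_trans h1 ?_
    have hbddρ : BddAbove (Set.range fun ρ : {ρ : H →ₗ[ℂ] H // IsDensity ρ} =>
        sdDist (⇑a') (⇑b) ρ.1) := by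
      refine ⟨S, ?_⟩
      rintro _ ⟨ρ, rfl⟩
      exact hsd_le ρ.1 ρ.2
    exact le_ciSup hbddρ (⟨ketbra ψ0, hdens⟩ : {ρ : H →ₗ[ℂ] H // IsDensity ρ})
  have hRHS : (⨆ i : Fin d, ⨆ ψ : {ψ : H // ‖ψ‖ = 1},
      (‖⟪(ψ : H), b i⟫‖ ^ 2 - ∑ k : Fin d, ‖⟪(ψ : H), a' k⟫‖ ^ 2 * ‖⟪b i, a' k⟫‖ ^ 2)) = S := by
    have hper : ∀ i : Fin d, (⨆ ψ : {ψ : H // ‖ψ‖ = 1},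
        (‖⟪(ψ : H), b i⟫‖ ^ 2 - ∑ k : Fin d, ‖⟪(ψ : H), a' k⟫‖ ^ 2 * ‖⟪b i, a' k⟫‖ ^ 2)) = μ i := by
      intro i
      rw [← hsupre i]
      exact congrArg iSup (funext fun ψ => by
        rw [inner_distOp_self, Complex.ofReal_re])
    rw [hS]
    exact iSup_congr hper
  rw [hRHS]
  exact le_antisymm hsi_le hsi_ge
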